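/- For a precise qualitative expectation φ, separating multiplication with φ distributes over pointwise multiplication: φ ⋆ (Y · Z) = (φ ⋆ Y) · (φ ⋆ Z). -/

import Mathlib

open ENNReal

abbrev Heap := ℤ → Option ℤ
abbrev Stack := String → ℤ
abbrev PState := Stack × Heap
abbrev Exp := PState → ℝ≥0∞

/-- Heaps are disjoint if their domains are disjoint. -/
def HDisj (h₁ h₂ : Heap) : Prop := ∀ l, h₁ l = none ∨ h₂ l = none

/-- Disjoint union of heaps. -/
def HJoin (h₁ h₂ : Heap) : Heap := fun l => (h₁ l).orElse (fun _ => h₂ l)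

/-- Separating multiplication: (X ⋆ Y)(s,h) = sup { X(s,h₁)·Y(s,h₂) | h₁ ⋆ h₂ = h }. -/
noncomputable def sepMul (X Y : Exp) : Exp := fun σ =>
  ⨆ h₁, ⨆ h₂, ⨆ (_ : HDisj h₁ h₂ ∧ HJoin h₁ h₂ = σ.2), X (σ.1, h₁) * Y (σ.1, h₂)

/-- One-bounded expectations take values in [0,1]. -/
def OneBounded (X : Exp) : Prop := ∀ σ, X σ ≤ 1

/-- Qualitative expectations take values in {0,1}. -/
def Qualitative (φ : Exp) : Prop := ∀ σ, φ σ = 0 ∨ φ σ = 1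

/-- Guarded magic wand: (φ -⋆ X)(s,h) = inf { X(s, h ⋆ h') | φ(s,h') = 1, h' ⊥ h },
with the infimum of the empty set being 1 (for one-bounded X). -/
noncomputable def wand (φ X : Exp) : Exp := fun σ =>
  (⨅ h' : {h' : Heap // φ (σ.1, h') = 1 ∧ HDisj σ.2 h'}, X (σ.1, HJoin σ.2 h'.1)) ⊓ 1

/-- An expectation is precise if for every state at most one subheap of the heap
gives it a nonzero value. -/
def Precise (X : Exp) : Prop := ∀ (s : Stack) (h : Heap),
  Set.Subsingleton
    {h1 : Heap | (∃ h2, HDisj h1 h2 ∧ HJoin h1 h2 = h) ∧ 0 < X (s, h1)}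


lemma hjoin_right_unique {h1 h2 h2' : Heap}
    (d : HDisj h1 h2) (d' : HDisj h1 h2')
    (e : HJoin h1 h2 = HJoin h1 h2') : h2 = h2' := by
  funext l
  have el := congrFun e l
  cases hl : h1 l with
  | none => simpa [HJoin, hl] using el
  | some v =>
    rcases d l with h | h
    · rw [hl] at h; cases h
    · rcases d' l with h' | h'
      · rw [hl] at h'; cases h'
      · rw [h, h']

theorem precise_sepMul_mul (φ Y Z : Exp)
    (hφ : Qualitative φ) (hprec : Precise φ)
    (hY : OneBounded Y) (hZ : OneBounded Z) :
    sepMul φ (fun σ => Y σ * Z σ) =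
      fun σ => sepMul φ Y σ * sepMul φ Z σ := by
  funext σ
  obtain ⟨s, h⟩ := σ
  apply le_antisymm
  · -- ≤ direction
    refine iSup_le fun h1 => iSup_le fun h2 => iSup_le fun ⟨hd, hj⟩ => ?_
    rcases hφ (s, h1) with h0 | h1eq
    · simp [h0]
    · have hl : φ (s, h1) * (Y (s, h2) * Z (s, h2))
          = (φ (s, h1) * Y (s, h2)) * (φ (s, h1) * Z (s, h2)) := by
        rw [h1eq]; ring
      rw [hl]
      exact mul_le_mul'
        (le_iSup_of_le h1 (le_iSup_of_le h2 (le_iSup_of_le ⟨hd, hj⟩ le_rfl)))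
        (le_iSup_of_le h1 (le_iSup_of_le h2 (le_iSup_of_le ⟨hd, hj⟩ le_rfl)))
  · -- ≥ direction
    by_cases hex : ∃ h1 h2, (HDisj h1 h2 ∧ HJoin h1 h2 = h) ∧ φ (s, h1) = 1
    · obtain ⟨h1, h2, ⟨hd, hj⟩, hφ1⟩ := hex
      have hmem : h1 ∈ {h1 : Heap | (∃ h2, HDisj h1 h2 ∧ HJoin h1 h2 = h) ∧ 0 < φ (s, h1)} :=
        ⟨⟨h2, hd, hj⟩, by rw [hφ1]; exact zero_lt_one⟩
      have keyY : sepMul φ Y (s, h) ≤ Y (s, h2) := by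
        refine iSup_le fun h1' => iSup_le fun h2' => iSup_le fun ⟨hd', hj'⟩ => ?_
        rcases hφ (s, h1') with h0 | h1eq
        · simp [h0]
        · have hmem' : h1' ∈ {h1 : Heap | (∃ h2, HDisj h1 h2 ∧ HJoin h1 h2 = h) ∧ 0 < φ (s, h1)} :=
            ⟨⟨h2', hd', hj'⟩, by rw [h1eq]; exact zero_lt_one⟩
          have e1 : h1' = h1 := hprec s h hmem' hmem
          subst e1
          have e2 : h2' = h2 := hjoin_right_unique hd' hd (by rw [hj', hj])
          subst e2
          rw [h1eq, one_mul]
      have keyZ : sepMul φ Z (s, h) ≤ Z (s, h2) := by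
        refine iSup_le fun h1' => iSup_le fun h2' => iSup_le fun ⟨hd', hj'⟩ => ?_
        rcases hφ (s, h1') with h0 | h1eq
        · simp [h0]
        · have hmem' : h1' ∈ {h1 : Heap | (∃ h2, HDisj h1 h2 ∧ HJoin h1 h2 = h) ∧ 0 < φ (s, h1)} :=
            ⟨⟨h2', hd', hj'⟩, by rw [h1eq]; exact zero_lt_one⟩
          have e1 : h1' = h1 := hprec s h hmem' hmem
          subst e1
          have e2 : h2' = h2 := hjoin_right_unique hd' hd (by rw [hj', hj])
          subst e2
          rw [h1eq, one_mul]
      calc sepMul φ Y (s, h) * sepMul φ Z (s, h)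
          ≤ Y (s, h2) * Z (s, h2) := mul_le_mul' keyY keyZ
        _ = φ (s, h1) * (Y (s, h2) * Z (s, h2)) := by rw [hφ1, one_mul]
        _ ≤ sepMul φ (fun σ => Y σ * Z σ) (s, h) :=
            le_iSup_of_le h1 (le_iSup_of_le h2 (le_iSup_of_le ⟨hd, hj⟩ le_rfl))
    · have hz : sepMul φ Y (s, h) = 0 := by
        refine le_antisymm (iSup_le fun h1 => iSup_le fun h2 => iSup_le fun ⟨hd, hj⟩ => ?_) (zero_le)
        rcases hφ (s, h1) with h0 | h1eq
        · simp [h0]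
        · exact absurd ⟨h1, h2, ⟨hd, hj⟩, h1eq⟩ hex
      simp [hz]
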